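/- For a ∈ B⁴, the function U_a(x) = log((1-|a|²)/(|a|²|x|² - 2a·x + 1)) + ((1-|x|²)/2)((1-|a|²)/(|a|²|x|² - 2a·x + 1) - 1) is biharmonic on the closed unit ball B⁴ and satisfies the vanishing Neumann condition ∂U_a/∂r = 0 on S³. -/

import Mathlib

open scoped BigOperators RealInnerProductSpace
open Real Filter Topology

/-- The Euclidean Laplacian of a function on `ℝⁿ` (as `EuclideanSpace`). -/
noncomputable def lapl {n : ℕ} (f : EuclideanSpace ℝ (Fin n) → ℝ)
    (x : EuclideanSpace ℝ (Fin n)) : ℝ :=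
  ∑ i : Fin n, fderiv ℝ (fun y => fderiv ℝ f y (EuclideanSpace.single i 1)) x
    (EuclideanSpace.single i 1)

noncomputable section Stmt18Aux

abbrev E4 : Type := EuclideanSpace ℝ (Fin 4)

/-- gradient continuous linear map of the form `p ⟪x,·⟫ + q ⟪a,·⟫`. -/
def gcl (a : E4) (p q : ℝ) (x : E4) : E4 →L[ℝ] ℝ :=
  p • (innerSL ℝ x : E4 →L[ℝ] ℝ) + q • (innerSL ℝ a : E4 →L[ℝ] ℝ)

lemma gcl_apply (a : E4) (p q : ℝ) (x v : E4) :
    gcl a p q x v = p * ⟪x, v⟫ + q * ⟪a, v⟫ := by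
  simp [gcl]

/-- `F` has gradient `A x • x + B x • a` at `x`. -/
def Grad (a : E4) (F A B : E4 → ℝ) (x : E4) : Prop :=
  HasFDerivAt F (gcl a (A x) (B x) x) x

lemma Grad.congr {a : E4} {F A B A' B' : E4 → ℝ} {x : E4}
    (h : Grad a F A B x) (hA : A' x = A x) (hB : B' x = B x) :
    Grad a F A' B' x := by
  unfold Grad at *; rw [hA, hB]; exact h

lemma grad_const (a : E4) (c : ℝ) (x : E4) :
    Grad a (fun _ => c) (fun _ => 0) (fun _ => 0) x := by
  have : gcl a 0 0 x = 0 := by ext v; simp [gcl]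
  unfold Grad; rw [this]; exact hasFDerivAt_const c x

lemma grad_normSq (a : E4) (x : E4) :
    Grad a (fun y => ‖y‖ ^ 2) (fun _ => 2) (fun _ => 0) x := by
  unfold Grad
  have h := (hasStrictFDerivAt_norm_sq x).hasFDerivAt
  refine h.congr_fderiv ?_
  ext v; simp [gcl, two_smul, two_mul]

lemma grad_inner (a : E4) (x : E4) :
    Grad a (fun y => ⟪a, y⟫) (fun _ => 0) (fun _ => 1) x := by
  unfold Grad
  have h := (innerSL ℝ a).hasFDerivAt (x := x)
  refine h.congr_fderiv ?_
  ext v; simp [gcl]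

lemma Grad.add {a : E4} {F G A B C D : E4 → ℝ} {x : E4}
    (hF : Grad a F A B x) (hG : Grad a G C D x) :
    Grad a (fun y => F y + G y) (fun y => A y + C y) (fun y => B y + D y) x := by
  unfold Grad at *
  refine (hF.add hG).congr_fderiv ?_
  ext v; simp [gcl, innerSL_apply_apply]; ring

lemma Grad.sub {a : E4} {F G A B C D : E4 → ℝ} {x : E4}
    (hF : Grad a F A B x) (hG : Grad a G C D x) :
    Grad a (fun y => F y - G y) (fun y => A y - C y) (fun y => B y - D y) x := by
  unfold Grad at *
  refine (hF.sub hG).congr_fderiv ?_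
  ext v; simp [gcl, innerSL_apply_apply]; ring

lemma Grad.mul {a : E4} {F G A B C D : E4 → ℝ} {x : E4}
    (hF : Grad a F A B x) (hG : Grad a G C D x) :
    Grad a (fun y => F y * G y) (fun y => F y * C y + G y * A y)
      (fun y => F y * D y + G y * B y) x := by
  unfold Grad at *
  refine (hF.mul hG).congr_fderiv ?_
  ext v; simp [gcl, innerSL_apply_apply]; ring

lemma Grad.const_mul {a : E4} {F A B : E4 → ℝ} {x : E4}
    (hF : Grad a F A B x) (c : ℝ) :
    Grad a (fun y => c * F y) (fun y => c * A y) (fun y => c * B y) x := by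
  have := (grad_const a c x).mul hF
  exact this.congr (by simp) (by simp)

lemma Grad.inv {a : E4} {F A B : E4 → ℝ} {x : E4}
    (hF : Grad a F A B x) (hx : F x ≠ 0) :
    Grad a (fun y => (F y)⁻¹) (fun y => -A y / F y ^ 2) (fun y => -B y / F y ^ 2) x := by
  unfold Grad at *
  have h := (hasFDerivAt_inv hx).comp x hF
  refine h.congr_fderiv ?_
  ext v
  simp only [gcl, ContinuousLinearMap.add_apply, ContinuousLinearMap.coe_smul',
    Pi.smul_apply, smul_eq_mul, ContinuousLinearMap.coe_comp', Function.comp_apply,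
    ContinuousLinearMap.smulRight_apply, ContinuousLinearMap.one_apply, innerSL_apply_apply,
    ContinuousLinearMap.toSpanSingleton_apply]
  field_simp [hx]
  ring

lemma Grad.div {a : E4} {F G A B C D : E4 → ℝ} {x : E4}
    (hF : Grad a F A B x) (hG : Grad a G C D x) (hx : G x ≠ 0) :
    Grad a (fun y => F y / G y)
      (fun y => (A y * G y - F y * C y) / G y ^ 2)
      (fun y => (B y * G y - F y * D y) / G y ^ 2) x := by
  have h := hF.mul (hG.inv hx)
  simp only [div_eq_mul_inv]
  exact h.congr (by field_simp; ring) (by field_simp; ring)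

lemma Grad.log {a : E4} {F A B : E4 → ℝ} {x : E4}
    (hF : Grad a F A B x) (hx : F x ≠ 0) :
    Grad a (fun y => Real.log (F y)) (fun y => A y / F y) (fun y => B y / F y) x := by
  unfold Grad at *
  have h := hF.log hx
  refine h.congr_fderiv ?_
  ext v
  simp only [gcl, ContinuousLinearMap.add_apply, ContinuousLinearMap.coe_smul',
    Pi.smul_apply, smul_eq_mul, innerSL_apply_apply]
  field_simp [hx]

lemma sum_smul_single (x : E4) :
    ∑ i : Fin 4, x i • EuclideanSpace.single i (1 : ℝ) = x := by
  refine PiLp.ext fun j => ?_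
  rw [WithLp.ofLp_sum, Fintype.sum_apply]
  simp [EuclideanSpace.single_apply, Finset.sum_ite_eq', smul_eq_mul]

lemma grad_coord (x : E4) (i : Fin 4) :
    HasFDerivAt (fun y : E4 => ⟪y, EuclideanSpace.single i (1 : ℝ)⟫)
      (innerSL ℝ (EuclideanSpace.single i (1 : ℝ))) x := by
  have h := (innerSL ℝ (EuclideanSpace.single i (1 : ℝ))).hasFDerivAt (x := x)
  have : (fun y : E4 => ⟪y, EuclideanSpace.single i (1 : ℝ)⟫)
      = fun y => (innerSL ℝ (EuclideanSpace.single i (1 : ℝ))) y := by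
    funext y; simp [real_inner_comm]
  rw [this]; exact h

/-- Master lemma: Laplacian of a function with gradient `A x • x + B x • a`. -/
lemma lapl_eq {a : E4} {O : Set E4} (hO : IsOpen O) {x : E4} (hx : x ∈ O)
    {F A B P Q R S : E4 → ℝ}
    (hF : ∀ y ∈ O, Grad a F A B y)
    (hA : Grad a A P Q x) (hB : Grad a B R S x) :
    lapl F x = (P x * ‖x‖ ^ 2 + Q x * ⟪a, x⟫) + 4 * A x
      + (R x * ⟪a, x⟫ + S x * ‖a‖ ^ 2) := by
  have hA' : HasFDerivAt A (gcl a (P x) (Q x) x) x := hA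
  have hB' : HasFDerivAt B (gcl a (R x) (S x) x) x := hB
  set LA := gcl a (P x) (Q x) x with hLA
  set LB := gcl a (R x) (S x) x with hLB
  have hone : ∀ i : Fin 4,
      ⟪(EuclideanSpace.single i (1 : ℝ) : E4), (EuclideanSpace.single i (1 : ℝ) : E4)⟫ = (1 : ℝ) := by
    intro i
    simp [EuclideanSpace.inner_single_right, EuclideanSpace.single_apply]
  have key : ∀ i : Fin 4,
      fderiv ℝ (fun y => fderiv ℝ F y (EuclideanSpace.single i 1)) x (EuclideanSpace.single i 1)
        = A x + x i * LA (EuclideanSpace.single i 1) + a i * LB (EuclideanSpace.single i 1) := by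
    intro i
    have hev : (fun y => fderiv ℝ F y (EuclideanSpace.single i 1)) =ᶠ[𝓝 x]
        (fun y => A y * ⟪y, EuclideanSpace.single i (1 : ℝ)⟫
          + B y * ⟪a, EuclideanSpace.single i (1 : ℝ)⟫) := by
      filter_upwards [hO.mem_nhds hx] with y hy
      have hGy : HasFDerivAt F (gcl a (A y) (B y) y) y := hF y hy
      rw [hGy.fderiv, gcl_apply]
    rw [hev.fderiv_eq]
    have hder : HasFDerivAt (fun y : E4 => A y * ⟪y, EuclideanSpace.single i (1 : ℝ)⟫
        + B y * ⟪a, EuclideanSpace.single i (1 : ℝ)⟫)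
        ((A x • innerSL ℝ (EuclideanSpace.single i (1 : ℝ))
            + ⟪x, EuclideanSpace.single i (1 : ℝ)⟫ • LA)
          + (B x • (0 : E4 →L[ℝ] ℝ) + ⟪a, EuclideanSpace.single i (1 : ℝ)⟫ • LB)) x :=
      (hA'.mul (grad_coord x i)).add (hB'.mul (hasFDerivAt_const _ x))
    rw [hder.fderiv]
    have h1 : ⟪x, EuclideanSpace.single i (1 : ℝ)⟫ = x i := by
      simp [EuclideanSpace.inner_single_right]
    have h2 : ⟪a, EuclideanSpace.single i (1 : ℝ)⟫ = a i := by
      simp [EuclideanSpace.inner_single_right]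
    simp only [ContinuousLinearMap.add_apply, ContinuousLinearMap.coe_smul', Pi.smul_apply,
      smul_eq_mul, innerSL_apply_apply, ContinuousLinearMap.zero_apply, h1, h2, hone i]
    ring
  have sx : ∑ i : Fin 4, x i * LA (EuclideanSpace.single i 1) = LA x := by
    calc ∑ i : Fin 4, x i * LA (EuclideanSpace.single i 1)
        = ∑ i : Fin 4, LA (x i • EuclideanSpace.single i 1) := by
          simp [map_smul]
      _ = LA (∑ i : Fin 4, x i • EuclideanSpace.single i 1) := (map_sum LA _ _).symm
      _ = LA x := by rw [sum_smul_single]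
  have sa : ∑ i : Fin 4, a i * LB (EuclideanSpace.single i 1) = LB a := by
    calc ∑ i : Fin 4, a i * LB (EuclideanSpace.single i 1)
        = ∑ i : Fin 4, LB (a i • EuclideanSpace.single i 1) := by
          simp [map_smul]
      _ = LB (∑ i : Fin 4, a i • EuclideanSpace.single i 1) := (map_sum LB _ _).symm
      _ = LB a := by rw [sum_smul_single]
  have hLAx : LA x = P x * ‖x‖ ^ 2 + Q x * ⟪a, x⟫ := by
    rw [hLA, gcl_apply, real_inner_self_eq_norm_sq]
  have hLBa : LB a = R x * ⟪a, x⟫ + S x * ‖a‖ ^ 2 := by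
    rw [hLB, gcl_apply, real_inner_self_eq_norm_sq, real_inner_comm]
  unfold lapl
  simp only [key]
  rw [Finset.sum_add_distrib, Finset.sum_add_distrib, sx, sa, hLAx, hLBa]
  simp only [Finset.sum_const, Finset.card_univ, Fintype.card_fin, nsmul_eq_mul]
  push_cast
  ring

end Stmt18Aux

noncomputable section App

/-- denominator -/
def df (a : E4) : E4 → ℝ := fun y => ‖a‖ ^ 2 * ‖y‖ ^ 2 - 2 * ⟪a, y⟫ + 1

def Uf (a : E4) : E4 → ℝ := fun x =>
  Real.log ((1 - ‖a‖ ^ 2) / (‖a‖ ^ 2 * ‖x‖ ^ 2 - 2 * ⟪a, x⟫ + 1)) +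
    (1 - ‖x‖ ^ 2) / 2 *
      ((1 - ‖a‖ ^ 2) / (‖a‖ ^ 2 * ‖x‖ ^ 2 - 2 * ⟪a, x⟫ + 1) - 1)

def A0 (a : E4) : E4 → ℝ := fun y =>
  1 - (2 * ‖a‖ ^ 2 + (1 - ‖a‖ ^ 2)) / df a y
    - (1 - ‖a‖ ^ 2) * ‖a‖ ^ 2 * (1 - ‖y‖ ^ 2) / (df a y * df a y)

def B0 (a : E4) : E4 → ℝ := fun y =>
  2 / df a y + (1 - ‖a‖ ^ 2) * (1 - ‖y‖ ^ 2) / (df a y * df a y)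

def Nf (a : E4) : E4 → ℝ := fun y =>
  4 * ‖a‖ ^ 2 * (1 + ‖y‖ ^ 2 - 2 * ⟪a, y⟫) - 4 * (1 - ‖a‖ ^ 2) * ⟪a, y⟫

def Vf (a : E4) : E4 → ℝ := fun y =>
  4 - (4 + 4 * ‖a‖ ^ 2) / df a y + Nf a y / (df a y * df a y)

def Av (a : E4) : E4 → ℝ := fun y =>
  (8 * ‖a‖ ^ 2 * ‖a‖ ^ 2 + 16 * ‖a‖ ^ 2) / (df a y * df a y)
    - 4 * ‖a‖ ^ 2 * Nf a y / (df a y * df a y * df a y)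

def Bv (a : E4) : E4 → ℝ := fun y =>
  (-(12 + 12 * ‖a‖ ^ 2)) / (df a y * df a y) + 4 * Nf a y / (df a y * df a y * df a y)

lemma grad_df (a : E4) (y : E4) :
    Grad a (df a) (fun _ => 2 * ‖a‖ ^ 2) (fun _ => -2) y := by
  have h := ((((grad_normSq a y).const_mul (‖a‖ ^ 2)).sub
      ((grad_inner a y).const_mul 2)).add (grad_const a 1 y))
  exact h.congr (by ring) (by ring)

lemma df_cont (a : E4) : Continuous (df a) := by
  unfold df
  exact ((continuous_const.mul (continuous_norm.pow 2)).sub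
    (continuous_const.mul (continuous_const.inner continuous_id))).add continuous_const

lemma df_pos {a x : E4} (ha : ‖a‖ < 1) (hx : ‖x‖ ≤ 1) : 0 < df a x := by
  have h1 := real_inner_le_norm a x
  have hu : ‖a‖ * ‖x‖ ≤ ‖a‖ := mul_le_of_le_one_right (norm_nonneg a) hx
  have h2 : 0 < 1 - ‖a‖ * ‖x‖ := by nlinarith
  unfold df
  nlinarith [mul_pos h2 h2]

lemma grad_Uf {a : E4} (ha : ‖a‖ < 1) {y : E4} (hd : 0 < df a y) :
    Grad a (Uf a) (A0 a) (B0 a) y := by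
  have hc : (0:ℝ) < 1 - ‖a‖ ^ 2 := by nlinarith [norm_nonneg a]
  have hd' : df a y ≠ 0 := hd.ne'
  have hq := (grad_const a (1 - ‖a‖ ^ 2) y).div (grad_df a y) hd'
  have hlog := hq.log (div_pos hc hd).ne'
  have hpoly := ((grad_const a 1 y).sub (grad_normSq a y)).div (grad_const a 2 y)
    (two_ne_zero)
  have hfac := hq.sub (grad_const a 1 y)
  have hU := hlog.add (hpoly.mul hfac)
  refine hU.congr ?_ ?_
  · show A0 a y = _
    unfold A0
    field_simp [hd', hc.ne']
    ring
  · show B0 a y = _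
    unfold B0
    field_simp [hd', hc.ne']
    ring

lemma grad_Nf (a : E4) (y : E4) :
    Grad a (Nf a) (fun _ => 8 * ‖a‖ ^ 2) (fun _ => -8 * ‖a‖ ^ 2 - 4 * (1 - ‖a‖ ^ 2)) y := by
  have h := ((((grad_const a 1 y).add (grad_normSq a y)).sub
      ((grad_inner a y).const_mul 2)).const_mul (4 * ‖a‖ ^ 2)).sub
      ((grad_inner a y).const_mul (4 * (1 - ‖a‖ ^ 2)))
  exact h.congr (by ring) (by ring)

lemma grad_Vf {a : E4} {y : E4} (hd : 0 < df a y) :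
    Grad a (Vf a) (Av a) (Bv a) y := by
  have hd' : df a y ≠ 0 := hd.ne'
  have hdd : df a y * df a y ≠ 0 := mul_ne_zero hd' hd'
  have h1 := (grad_const a (4 + 4 * ‖a‖ ^ 2) y).div (grad_df a y) hd'
  have h2 := (grad_Nf a y).div ((grad_df a y).mul (grad_df a y)) hdd
  have hV := ((grad_const a 4 y).sub h1).add h2
  refine hV.congr ?_ ?_
  · show Av a y = _
    unfold Av
    field_simp [hd']
    ring
  · show Bv a y = _
    unfold Bv
    field_simp [hd']
    ring

set_option maxHeartbeats 2000000 in
lemma lapl_Uf {a : E4} (ha : ‖a‖ < 1) {x : E4} (hx : 0 < df a x) :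
    lapl (Uf a) x = Vf a x := by
  have hO : IsOpen {y : E4 | 0 < df a y} := isOpen_lt continuous_const (df_cont a)
  have hd' : df a x ≠ 0 := hx.ne'
  have hdd : df a x * df a x ≠ 0 := mul_ne_zero hd' hd'
  have hc : (0:ℝ) < 1 - ‖a‖ ^ 2 := by nlinarith [norm_nonneg a]
  have hA := ((grad_const a 1 x).sub
      ((grad_const a (2 * ‖a‖ ^ 2 + (1 - ‖a‖ ^ 2)) x).div (grad_df a x) hd')).sub
      ((((grad_const a 1 x).sub (grad_normSq a x)).const_mul
        ((1 - ‖a‖ ^ 2) * ‖a‖ ^ 2)).div ((grad_df a x).mul (grad_df a x)) hdd)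
  have hB := ((grad_const a 2 x).div (grad_df a x) hd').add
      ((((grad_const a 1 x).sub (grad_normSq a x)).const_mul (1 - ‖a‖ ^ 2)).div
        ((grad_df a x).mul (grad_df a x)) hdd)
  have h := lapl_eq (a := a) hO hx (fun y hy => grad_Uf ha hy) hA hB
  rw [h]
  have hd0 : ‖a‖ ^ 2 * ‖x‖ ^ 2 - 2 * ⟪a, x⟫ + 1 ≠ 0 := hd'
  have hc' : (1:ℝ) - ‖a‖ ^ 2 ≠ 0 := hc.ne'
  unfold Vf Nf A0 df

  generalize hα : ‖a‖ ^ 2 = al at hd0 hc' ⊢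
  generalize hs : ‖x‖ ^ 2 = s at hd0 ⊢
  generalize ht : ⟪a, x⟫ = t at hd0 ⊢
  field_simp [hd0, hc']
  ring

set_option maxHeartbeats 2000000 in
lemma lapl_lapl_Uf {a : E4} (ha : ‖a‖ < 1) {x : E4} (hx : 0 < df a x) :
    lapl (lapl (Uf a)) x = 0 := by
  have hO : IsOpen {y : E4 | 0 < df a y} := isOpen_lt continuous_const (df_cont a)
  have hd' : df a x ≠ 0 := hx.ne'
  have hdd : df a x * df a x ≠ 0 := mul_ne_zero hd' hd'
  have hddd : df a x * df a x * df a x ≠ 0 := mul_ne_zero hdd hd'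
  have hF : ∀ y ∈ {y : E4 | 0 < df a y}, Grad a (lapl (Uf a)) (Av a) (Bv a) y := by
    intro y hy
    have h1 : Grad a (Vf a) (Av a) (Bv a) y := grad_Vf hy
    have hev : lapl (Uf a) =ᶠ[𝓝 y] Vf a := by
      filter_upwards [hO.mem_nhds hy] with z hz
      exact lapl_Uf ha hz
    exact (HasFDerivAt.congr_of_eventuallyEq h1 hev : _)
  have hA := ((grad_const a (8 * ‖a‖ ^ 2 * ‖a‖ ^ 2 + 16 * ‖a‖ ^ 2) x).div
      ((grad_df a x).mul (grad_df a x)) hdd).sub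
      (((grad_Nf a x).const_mul (4 * ‖a‖ ^ 2)).div
        (((grad_df a x).mul (grad_df a x)).mul (grad_df a x)) hddd)
  have hB := ((grad_const a (-(12 + 12 * ‖a‖ ^ 2)) x).div
      ((grad_df a x).mul (grad_df a x)) hdd).add
      (((grad_Nf a x).const_mul 4).div
        (((grad_df a x).mul (grad_df a x)).mul (grad_df a x)) hddd)
  have h := lapl_eq (a := a) hO hx hF hA hB
  rw [h]
  have hd0 : ‖a‖ ^ 2 * ‖x‖ ^ 2 - 2 * ⟪a, x⟫ + 1 ≠ 0 := hd'
  first | unfold Av Bv Nf df | unfold Av Nf df | unfold Nf df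
  generalize hα : ‖a‖ ^ 2 = al at hd0 ⊢
  generalize hs : ‖x‖ ^ 2 = s at hd0 ⊢
  generalize ht : ⟪a, x⟫ = t at hd0 ⊢
  field_simp [hd0]
  ring

lemma neumann {a : E4} (ha : ‖a‖ < 1) {x : E4} (hx : ‖x‖ = 1) :
    deriv (fun t : ℝ => Uf a (t • x)) 1 = 0 := by
  have hc : (0:ℝ) < 1 - ‖a‖ ^ 2 := by nlinarith [norm_nonneg a]
  have hd1 : (0:ℝ) < ‖a‖ ^ 2 * (1:ℝ) ^ 2 - 2 * (1 * ⟪a, x⟫) + 1 := by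
    have := df_pos ha hx.le
    unfold df at this
    rw [hx] at this
    convert this using 2 <;> ring
  have heq : (fun t : ℝ => Uf a (t • x)) = fun t : ℝ =>
      Real.log ((1 - ‖a‖ ^ 2) / (‖a‖ ^ 2 * t ^ 2 - 2 * (t * ⟪a, x⟫) + 1)) +
        (1 - t ^ 2) / 2 *
          ((1 - ‖a‖ ^ 2) / (‖a‖ ^ 2 * t ^ 2 - 2 * (t * ⟪a, x⟫) + 1) - 1) := by
    funext t
    unfold Uf
    rw [real_inner_smul_right]
    rw [norm_smul, hx]
    simp [mul_pow, sq_abs]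
  rw [heq]
  have hden : HasDerivAt (fun t : ℝ => ‖a‖ ^ 2 * t ^ 2 - 2 * (t * ⟪a, x⟫) + 1)
      (‖a‖ ^ 2 * (2 * 1 ^ 1) - 2 * (1 * ⟪a, x⟫) + 0) 1 := by
    have h1 := (hasDerivAt_pow 2 (1:ℝ)).const_mul (‖a‖ ^ 2)
    have h2 := ((hasDerivAt_id (1:ℝ)).mul_const (⟪a, x⟫ : ℝ)).const_mul 2
    have h3 := (h1.sub h2).add_const 1
    exact h3.congr_deriv (by norm_num)
  have hquot := (hasDerivAt_const (1:ℝ) (1 - ‖a‖ ^ 2)).div hden hd1.ne'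
  have hlog := hquot.log (div_pos hc hd1).ne'
  have hpoly := ((hasDerivAt_const (1:ℝ) (1:ℝ)).sub (hasDerivAt_pow 2 (1:ℝ))).div_const 2
  have hfac := hquot.sub_const 1
  have hU := hlog.add (hpoly.mul hfac)
  rw [HasDerivAt.deriv (f := fun t : ℝ =>
        Real.log ((1 - ‖a‖ ^ 2) / (‖a‖ ^ 2 * t ^ 2 - 2 * (t * ⟪a, x⟫) + 1)) +
          (1 - t ^ 2) / 2 *
            ((1 - ‖a‖ ^ 2) / (‖a‖ ^ 2 * t ^ 2 - 2 * (t * ⟪a, x⟫) + 1) - 1)) hU]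
  simp only [Pi.div_apply, Pi.sub_apply]
  have hd0 : ‖a‖ ^ 2 * (1:ℝ) ^ 2 - 2 * (1 * ⟪a, x⟫) + 1 ≠ 0 := hd1.ne'
  generalize hα : ‖a‖ ^ 2 = al at hd0 hc ⊢
  generalize ht : (⟪a, x⟫ : ℝ) = t at hd0 ⊢
  have hc' : (1:ℝ) - al ≠ 0 := hc.ne'
  field_simp [hd0] at *
  field_simp [hd0, hc']
  ring

end App

/-- for `a ∈ B⁴`, the function
`U_a(x) = log((1-|a|²)/(|a|²|x|²-2a·x+1)) + ((1-|x|²)/2)((1-|a|²)/(|a|²|x|²-2a·x+1) - 1)`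
is biharmonic on the closed unit ball `B⁴` and satisfies `∂U_a/∂r = 0` on `S³`. -/
theorem stmt18 (a : EuclideanSpace ℝ (Fin 4)) (ha : ‖a‖ < 1) :
    let U : EuclideanSpace ℝ (Fin 4) → ℝ := fun x =>
      Real.log ((1 - ‖a‖ ^ 2) / (‖a‖ ^ 2 * ‖x‖ ^ 2 - 2 * ⟪a, x⟫ + 1)) +
        (1 - ‖x‖ ^ 2) / 2 *
          ((1 - ‖a‖ ^ 2) / (‖a‖ ^ 2 * ‖x‖ ^ 2 - 2 * ⟪a, x⟫ + 1) - 1)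
    (∀ x : EuclideanSpace ℝ (Fin 4), ‖x‖ ≤ 1 → lapl (lapl U) x = 0) ∧
    (∀ x : EuclideanSpace ℝ (Fin 4), ‖x‖ = 1 →
      deriv (fun t : ℝ => U (t • x)) 1 = 0) := by
  refine ⟨fun x hx => ?_, fun x hx => ?_⟩
  · exact lapl_lapl_Uf ha (df_pos ha hx)
  · exact neumann ha hx
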